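/- Let w be a right-infinite word over a finite alphabet with empty radical, i.e., Rad(w) = ∅. Then URec(w) is dense in Rec(w): every nonempty open subset of Rec(w) contains a uniformly recurrent class. -/

import Mathlib

/-- The factor of `w` of length `n` starting at position `i`. -/
def factorAt {A : Type*} (w : ℕ → A) (i n : ℕ) : List A :=
  (List.range n).map (fun k => w (i + k))

/-- `u` is a (finite, contiguous) factor of the right-infinite word `w`. -/
def IsFactorOf {A : Type*} (u : List A) (w : ℕ → A) : Prop :=
  ∃ i, u = factorAt w i u.length

/-- The set of factors of `w`. -/
def Fac {A : Type*} (w : ℕ → A) : Set (List A) := {u | IsFactorOf u w}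

/-- `w` is recurrent: every factor occurs at arbitrarily large positions. -/
def Recurrent {A : Type*} (w : ℕ → A) : Prop :=
  ∀ u ∈ Fac w, ∀ N : ℕ, ∃ i ≥ N, u = factorAt w i u.length

/-- `w` is uniformly recurrent: each factor occurs in every sufficiently long factor. -/
def UniformlyRecurrent {A : Type*} (w : ℕ → A) : Prop :=
  ∀ u ∈ Fac w, ∃ N : ℕ, ∀ y ∈ Fac w, y.length = N → u <:+: y

/-- `w` is (purely) periodic. -/
def PeriodicWord {A : Type*} (w : ℕ → A) : Prop :=
  ∃ p ≥ 1, ∀ n, w (n + p) = w n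

/-- `w` is eventually periodic. -/
def EventuallyPeriodicWord {A : Type*} (w : ℕ → A) : Prop :=
  ∃ p ≥ 1, ∃ N, ∀ n ≥ N, w (n + p) = w n

/-- The factor complexity function of `w`. -/
noncomputable def cplx {A : Type*} (w : ℕ → A) (n : ℕ) : ℕ :=
  Set.ncard {u | u ∈ Fac w ∧ u.length = n}

/-- A set of finite words is factor-closed. -/
def FactorClosed {A : Type*} (S : Set (List A)) : Prop :=
  ∀ y ∈ S, ∀ u, u <:+: y → u ∈ S

/-- The radical of `w`. -/
def Rad {A : Type*} (w : ℕ → A) : Set (List A) :=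
  {z | z ∈ Fac w ∧ ∀ Y : Finset (List A),
    (∀ y ∈ Y, y ∈ Fac w ∧ z <:+: y) →
    ∃ N : ℕ, ∀ L : List (List A), L.length = N → (∀ y ∈ L, y ∈ Y) →
      L.flatten ∉ Fac w}

/-- The recurrent spectrum of `w`, with classes identified with their factor sets. -/
def RecSpec {A : Type*} (w : ℕ → A) : Set (Set (List A)) :=
  {F | ∃ v : ℕ → A, Recurrent v ∧ F = Fac v ∧ Fac v ⊆ Fac w}

/-- The topology on the recurrent spectrum, whose closed sets are the C(S)
for factor-closed S ⊆ Fac w (generated by the complements of the C(S)). -/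
def recTop {A : Type*} (w : ℕ → A) : TopologicalSpace {F // F ∈ RecSpec w} :=
  TopologicalSpace.generateFrom
    {U | ∃ S : Set (List A), S ⊆ Fac w ∧ FactorClosed S ∧
      U = {F : {F // F ∈ RecSpec w} | ¬ F.1 ⊆ S}}

-- helpers
lemma length_factorAt {A : Type*} (w : ℕ → A) (i n : ℕ) : (factorAt w i n).length = n := by
  simp [factorAt]

lemma factorAt_add {A : Type*} (w : ℕ → A) (i m n : ℕ) :
    factorAt w i (m + n) = factorAt w i m ++ factorAt w (i + m) n := by
  unfold factorAt
  rw [List.range_add, List.map_append, List.map_map]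
  congr 1
  apply List.map_congr_left
  intro k _
  simp only [Function.comp]
  congr 1
  omega

lemma factorAt_mem_fac {A : Type*} (w : ℕ → A) (i n : ℕ) : factorAt w i n ∈ Fac w :=
  ⟨i, by rw [length_factorAt]⟩

lemma nil_mem_fac {A : Type*} (w : ℕ → A) : ([] : List A) ∈ Fac w := ⟨0, rfl⟩

lemma infix_factorAt {A : Type*} {w : ℕ → A} {u : List A} {i n : ℕ}
    (h : u <:+: factorAt w i n) : ∃ j, u = factorAt w (i + j) u.length := by
  obtain ⟨p, t, he⟩ := h
  have hn : n = p.length + (u.length + t.length) := by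
    have := congrArg List.length he
    simp [length_factorAt] at this
    omega
  rw [hn, factorAt_add, factorAt_add, List.append_assoc] at he
  have h1 := List.append_inj he (by simp [length_factorAt])
  have h2 := List.append_inj h1.2 (by simp [length_factorAt])
  exact ⟨p.length, h2.1⟩

lemma fac_factorClosed {A : Type*} (w : ℕ → A) : FactorClosed (Fac w) := by
  rintro y ⟨i, hi⟩ u hu
  rw [hi] at hu
  obtain ⟨j, hj⟩ := infix_factorAt hu
  exact ⟨i + j, hj⟩

lemma finite_len {A : Type*} [Finite A] (n : ℕ) : {u : List A | u.length = n}.Finite := by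
  induction n with
  | zero =>
    convert Set.finite_singleton ([] : List A)
    ext u; simp [List.length_eq_zero_iff]
  | succ n ih =>
    have hsub : {u : List A | u.length = n + 1} ⊆
        Set.image2 List.cons Set.univ {u : List A | u.length = n} := by
      rintro (_ | ⟨a, l⟩) h
      · simp at h
      · exact ⟨a, trivial, l, by simpa using h, rfl⟩
    exact (Set.Finite.image2 _ Set.finite_univ ih).subset hsub

lemma sandwich {A : Type*} {p s t b b' r : List A} (he : p ++ s ++ t = b ++ b' ++ r)
    (h1 : p.length ≤ b.length) (h2 : b.length + b'.length ≤ p.length + s.length) :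
    b' <:+: s := by
  set d := b.length - p.length with hd
  have hs : s = ((b ++ b' ++ r).drop p.length).take s.length := by
    rw [← he]; simp
  have hsd : s.drop d = (b' ++ r).take (s.length - d) := by
    conv_lhs => rw [hs]
    rw [List.drop_take, List.drop_drop]
    congr 1
    have h3 : p.length + d = b.length := by omega
    have h4 : b ++ b' ++ r = b ++ (b' ++ r) := by simp
    rw [h3, h4, List.drop_left]
  have hb' : (s.drop d).take b'.length = b' := by
    rw [hsd, List.take_take]
    have : min b'.length (s.length - d) = b'.length := by omega
    rw [this, List.take_left' rfl]
  rw [← hb']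
  exact ((s.drop d).take_prefix b'.length).isInfix.trans (List.drop_suffix d s).isInfix


lemma length_le_flatten {A : Type*} (L : List (List A)) (h : ∀ b ∈ L, 1 ≤ b.length) :
    L.length ≤ L.flatten.length := by
  induction L with
  | nil => simp
  | cons b L ih =>
    simp only [List.flatten_cons, List.length_append, List.length_cons]
    have h1 := h b (by simp)
    have h2 := ih (fun b hb => h b (by simp [hb]))
    omega

lemma window {A : Type*} {Y : Finset (List A)} {y : List A} {B : ℕ}
    (hB1 : 1 ≤ B) (hb : ∀ b ∈ Y, y <:+: b) (hBb : ∀ b ∈ Y, b.length ≤ B) :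
    ∀ L : List (List A), (∀ b ∈ L, b ∈ Y) → ∀ s, s <:+: L.flatten →
      2 * B ≤ s.length → y <:+: s := by
  intro L
  induction L with
  | nil =>
    intro _ s hs hlen
    rw [List.flatten_nil, List.infix_nil] at hs
    subst hs
    simp at hlen
    omega
  | cons b L ih =>
    intro hLY s hs hlen
    rw [List.flatten_cons] at hs
    obtain ⟨p, t, he⟩ := hs
    rcases le_or_gt b.length p.length with hbp | hpb
    · -- s is infix of L.flatten
      apply ih (fun b' hb' => hLY b' (by simp [hb'])) s ?_ hlen
      refine ⟨p.drop b.length, t, ?_⟩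
      have : L.flatten = (b ++ L.flatten).drop b.length := by
        rw [List.drop_append_of_le_length (le_refl _)]
        simp
      rw [this, ← he, List.append_assoc, List.append_assoc,
        List.drop_append_of_le_length hbp]
    · have hbY : b ∈ Y := hLY b (by simp)
      have hbB : b.length ≤ B := hBb b hbY
      cases L with
      | nil =>
        exfalso
        have := congrArg List.length he
        simp at this
        omega
      | cons b' L' =>
        have hb'Y : b' ∈ Y := hLY b' (by simp)
        have hb'B : b'.length ≤ B := hBb b' hb'Y
        have he' : p ++ s ++ t = b ++ b' ++ L'.flatten := by
          rw [he, List.flatten_cons, List.append_assoc]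
        have hinf : b' <:+: s :=
          sandwich he' (by omega) (by omega)
        exact (hb b' hb'Y).trans hinf


/-- Prefix-building function. -/
noncomputable def prefFun {A : Type*} {S : Set (List A)} (hnil : [] ∈ S)
    (hext : ∀ u ∈ S, ∃ z : List A, z.length = 1 ∧ u ++ z ∈ S) : ℕ → {u : List A // u ∈ S}
  | 0 => ⟨[], hnil⟩
  | n+1 => ⟨(prefFun hnil hext n).1 ++ (hext _ (prefFun hnil hext n).2).choose,
      (hext _ (prefFun hnil hext n).2).choose_spec.2⟩

lemma prefFun_succ {A : Type*} {S : Set (List A)} (hnil : [] ∈ S)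
    (hext : ∀ u ∈ S, ∃ z : List A, z.length = 1 ∧ u ++ z ∈ S) (n : ℕ) :
    ∃ a : A, (prefFun hnil hext (n+1)).1 = (prefFun hnil hext n).1 ++ [a] := by
  have h := (hext _ (prefFun hnil hext n).2).choose_spec.1
  obtain ⟨a, ha⟩ := List.length_eq_one_iff.mp h
  exact ⟨a, congrArg (fun z => (prefFun hnil hext n).1 ++ z) ha⟩

lemma prefFun_len {A : Type*} {S : Set (List A)} (hnil : [] ∈ S)
    (hext : ∀ u ∈ S, ∃ z : List A, z.length = 1 ∧ u ++ z ∈ S) (n : ℕ) :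
    (prefFun hnil hext n).1.length = n := by
  induction n with
  | zero => rfl
  | succ n ih =>
    obtain ⟨a, ha⟩ := prefFun_succ hnil hext n
    rw [ha]
    simp [ih]

lemma exists_ur {A : Type*} [Finite A] (W₀ : Set (List A))
    (hfc : FactorClosed W₀) (hall : ∀ n : ℕ, ∃ u ∈ W₀, u.length = n) :
    ∃ v : ℕ → A, UniformlyRecurrent v ∧ Fac v ⊆ W₀ := by
  classical
  set 𝒞 : Set (Set (List A)) :=
    {S | S ⊆ W₀ ∧ FactorClosed S ∧ ∀ n : ℕ, ∃ u ∈ S, u.length = n} with h𝒞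
  -- Zorn
  have hchain : ∀ c ⊆ 𝒞, IsChain (· ⊆ ·) c → c.Nonempty → ∃ lb ∈ 𝒞, ∀ s ∈ c, lb ⊆ s := by
    intro c hc hchain ⟨S₀, hS₀⟩
    refine ⟨⋂₀ c, ⟨?_, ?_, ?_⟩, fun s hs => Set.sInter_subset_of_mem hs⟩
    · exact (Set.sInter_subset_of_mem hS₀).trans (hc hS₀).1
    · intro ys hys u hu
      rw [Set.mem_sInter] at hys ⊢
      exact fun S hS => (hc hS).2.1 ys (hys S hS) u hu
    · intro n
      set Len := {u : List A | u.length = n} with hLen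
      set D := (fun S => S ∩ Len) '' c with hD
      have hDfin : D.Finite := by
        apply Set.Finite.subset (finite_len n).finite_subsets
        rintro _ ⟨S, _, rfl⟩
        exact Set.inter_subset_right
      have hDne : D.Nonempty := ⟨S₀ ∩ Len, S₀, hS₀, rfl⟩
      obtain ⟨m, hmD, hmmin'⟩ := Set.Finite.exists_minimalFor id D hDfin hDne
      have hmmin : ∀ a' ∈ D, id a' ≤ id m → id m = id a' :=
        fun a' ha' h => le_antisymm (hmmin' ha' h) h
      obtain ⟨Sm, hSm, rfl⟩ := hmD
      have hm_sub : ∀ S ∈ c, Sm ∩ Len ⊆ S ∩ Len := by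
        intro S hS
        rcases hchain.total hSm hS with h | h
        · exact Set.inter_subset_inter_left Len h
        · have := hmmin (S ∩ Len) ⟨S, hS, rfl⟩ (Set.inter_subset_inter_left Len h)
          simp only [id] at this
          rw [this]
      obtain ⟨u, huSm, hulen⟩ := (hc hSm).2.2 n
      refine ⟨u, ?_, hulen⟩
      rw [Set.mem_sInter]
      exact fun S hS => (hm_sub S hS ⟨huSm, hulen⟩).1
  obtain ⟨S, hSsub, hSmem, hSmin⟩ := zorn_superset_nonempty 𝒞 hchain W₀ ⟨le_refl _, hfc, hall⟩
  obtain ⟨hSW, hSfc, hSall⟩ := hSmem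
  have hmineq : ∀ T ∈ 𝒞, T ⊆ S → T = S := by
    intro T hT hTS
    exact le_antisymm hTS (hSmin hT hTS)
  -- Right-extendability via minimality
  have hEXT : ∀ u ∈ S, ∀ n : ℕ, ∃ z : List A, z.length = n ∧ u ++ z ∈ S := by
    set R : Set (List A) := {u | ∀ n : ℕ, ∃ z : List A, z.length = n ∧ u ++ z ∈ S} with hR
    have hRS : R ⊆ S := by
      intro u hu
      obtain ⟨z, hz0, hzS⟩ := hu 0
      rw [List.length_eq_zero_iff] at hz0
      rw [hz0, List.append_nil] at hzS
      exact hzS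
    have hRC : R ∈ 𝒞 := by
      refine ⟨hRS.trans hSW, ?_, ?_⟩
      · -- factor closed
        rintro ys hys u ⟨p, t, hpt⟩
        intro n
        obtain ⟨z, hzn, hzS⟩ := hys n
        refine ⟨(t ++ z).take n, by simp [hzn], ?_⟩
        have hinf : u ++ (t ++ z).take n <:+: ys ++ z := by
          have h1 : u ++ (t ++ z).take n <+: u ++ (t ++ z) :=
            ⟨(t ++ z).drop n, by simp⟩
          have h2 : u ++ (t ++ z) <:+ ys ++ z := by
            refine ⟨p, ?_⟩
            rw [← hpt]
            simp
          exact h1.isInfix.trans h2.isInfix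
        exact hSfc _ hzS _ hinf
      · -- all lengths
        intro n
        have hg : ∀ m : ℕ, ∃ u ∈ S, u.length = n + m := fun m => hSall (n + m)
        choose g hgS hglen using hg
        set h : ℕ → List A := fun m => (g m).take n with hh
        have hhlen : ∀ m, (h m).length = n := by
          intro m
          simp [hh, hglen m]
        have : ∃ u ∈ {u : List A | u.length = n}, {m | h m = u}.Infinite := by
          by_contra hcon
          push_neg at hcon
          have : (Set.univ : Set ℕ).Finite := by
            have hcov : (Set.univ : Set ℕ) ⊆
                ⋃ u ∈ {u : List A | u.length = n}, {m | h m = u} := by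
              intro m _
              simp only [Set.mem_iUnion]
              exact ⟨h m, hhlen m, rfl⟩
            apply Set.Finite.subset _ hcov
            apply Set.Finite.biUnion (finite_len n)
            intro u hu
            rw [← Set.not_infinite]
            exact Set.not_infinite.mpr (hcon u hu)
          exact Set.infinite_univ this
        obtain ⟨u, hulen, huinf⟩ := this
        refine ⟨u, ?_, hulen⟩
        intro k
        obtain ⟨m, hm, hkm⟩ := huinf.exists_notMem_finite (Set.finite_Iic k)
        simp only [Set.mem_Iic, not_le] at hkm
        refine ⟨((g m).drop n).take k, ?_, ?_⟩
        · simp [hglen m]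
          omega
        · have : u ++ ((g m).drop n).take k = (g m).take (n + k) := by
            rw [List.take_add, ← hm]
          rw [this]
          exact hSfc _ (hgS m) _ ((g m).take_prefix (n + k)).isInfix
    have := hmineq R hRC hRS
    intro u hu
    rw [← this] at hu
    exact hu
  -- nil in S
  have hnil : ([] : List A) ∈ S := by
    obtain ⟨u, huS, hu0⟩ := hSall 0
    rw [List.length_eq_zero_iff] at hu0
    rwa [hu0] at huS
  have hext1 : ∀ u ∈ S, ∃ z : List A, z.length = 1 ∧ u ++ z ∈ S := fun u hu => hEXT u hu 1
  set pref := prefFun hnil hext1 with hpref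
  have hplen : ∀ n, (pref n).1.length = n := prefFun_len hnil hext1
  have hpne : ∀ n, (pref (n+1)).1 ≠ [] := by
    intro n h
    have := hplen (n+1)
    rw [h] at this
    simp at this
  set v : ℕ → A := fun k => (pref (k+1)).1.getLast (hpne k) with hv
  have hfp : ∀ n, factorAt v 0 n = (pref n).1 := by
    intro n
    induction n with
    | zero =>
      have := hplen 0
      rw [List.length_eq_zero_iff] at this
      rw [this]
      simp [factorAt]
    | succ n ih =>
      obtain ⟨a, ha⟩ := prefFun_succ hnil hext1 n
      have h1 : factorAt v 0 (n + 1) = factorAt v 0 n ++ factorAt v n 1 := by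
        have := factorAt_add v 0 n 1
        simpa using this
      have h2 : factorAt v n 1 = [v n] := by
        simp [factorAt, List.range_succ]
      have h3 : v n = a := by
        rw [hv]
        simp only
        have : (pref (n+1)).1.getLast (hpne n) = a := by
          have hc : (pref n).1 ++ [a] = (pref n).1.concat a := by
            rw [List.concat_eq_append]
          rw [show (pref (n+1)).1.getLast (hpne n) =
            ((pref n).1.concat a).getLast (by simp) from by congr 1; rw [ha, hc]]
          exact List.getLast_concat' _
        exact this
      rw [h1, h2, h3, ih, ha]
  have hfacS : Fac v ⊆ S := by
    rintro u ⟨i, hi⟩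
    have hsuf : u <:+: (pref (i + u.length)).1 := by
      rw [← hfp, factorAt_add, Nat.zero_add]
      refine List.IsSuffix.isInfix ?_
      nth_rewrite 1 [hi]
      exact List.suffix_append _ _
    exact hSfc _ (pref _).2 _ hsuf
  refine ⟨v, ?_, hfacS.trans hSW⟩
  intro u hu
  have huS : u ∈ S := hfacS hu
  set T : Set (List A) := {s ∈ S | ¬ u <:+: s} with hT
  have hTnotall : ¬ ∀ n : ℕ, ∃ s ∈ T, s.length = n := by
    intro hTall
    have hTC : T ∈ 𝒞 := by
      refine ⟨(Set.sep_subset _ _).trans hSW, ?_, hTall⟩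
      rintro ys ⟨hysS, hysnu⟩ z hz
      exact ⟨hSfc _ hysS _ hz, fun hcon => hysnu (hcon.trans hz)⟩
    have := hmineq T hTC (Set.sep_subset _ _)
    rw [← this] at huS
    exact huS.2 (List.infix_refl u)
  push_neg at hTnotall
  obtain ⟨N, hN⟩ := hTnotall
  refine ⟨N, ?_⟩
  intro z hz hzlen
  by_contra hcon
  exact hN z ⟨hfacS hz, hcon⟩ hzlen


lemma ur_recurrent {A : Type*} {v : ℕ → A} (h : UniformlyRecurrent v) : Recurrent v := by
  intro u hu N
  obtain ⟨M, hM⟩ := h u hu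
  have hy : u <:+: factorAt v N M :=
    hM _ (factorAt_mem_fac v N M) (length_factorAt v N M)
  obtain ⟨j, hj⟩ := infix_factorAt hy
  exact ⟨N + j, Nat.le_add_right _ _, hj⟩

lemma combine_factors {A : Type*} {v : ℕ → A} (hv : Recurrent v) {y₁ y₂ : List A}
    (h1 : y₁ ∈ Fac v) (h2 : y₂ ∈ Fac v) :
    ∃ z ∈ Fac v, y₁ <:+: z ∧ y₂ <:+: z := by
  obtain ⟨i, hi⟩ := h1
  obtain ⟨j, hjge, hj⟩ := hv y₂ h2 (i + y₁.length)
  have hij : i + y₁.length ≤ j := hjge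
  refine ⟨factorAt v i ((j - i) + y₂.length), factorAt_mem_fac _ _ _, ?_, ?_⟩
  · have hsplit : factorAt v i ((j - i) + y₂.length) =
        (factorAt v i y₁.length ++ factorAt v (i + y₁.length) ((j - i) - y₁.length)) ++
          factorAt v (i + (j - i)) y₂.length := by
      rw [← factorAt_add]
      have h' : y₁.length + ((j - i) - y₁.length) = j - i := by omega
      rw [h', ← factorAt_add]
    rw [hsplit, List.append_assoc]
    nth_rewrite 1 [hi]
    exact (List.prefix_append _ _).isInfix
  · rw [factorAt_add]
    refine List.IsSuffix.isInfix ?_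
    have hj' : i + (j - i) = j := by omega
    rw [hj']
    nth_rewrite 1 [hj]
    exact List.suffix_append _ _

lemma key_lemma {A : Type*} [Finite A] (w : ℕ → A) (hrad : Rad w = ∅) {y : List A}
    (hy : y ∈ Fac w) :
    ∃ v : ℕ → A, UniformlyRecurrent v ∧ Fac v ⊆ Fac w ∧ y ∈ Fac v := by
  classical
  have hnot : y ∉ Rad w := by rw [hrad]; exact Set.notMem_empty y
  have h2 : ¬ ∀ Y : Finset (List A), (∀ b ∈ Y, b ∈ Fac w ∧ y <:+: b) →
      ∃ N : ℕ, ∀ L : List (List A), L.length = N → (∀ b ∈ L, b ∈ Y) →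
        L.flatten ∉ Fac w := fun h => hnot ⟨hy, h⟩
  push_neg at h2
  obtain ⟨Y, hYfac, hL⟩ := h2
  by_cases hy0 : y = []
  · obtain ⟨v, hvUR, hvfac⟩ := exists_ur (Fac w) (fac_factorClosed w)
      (fun n => ⟨factorAt w 0 n, factorAt_mem_fac w 0 n, length_factorAt w 0 n⟩)
    exact ⟨v, hvUR, hvfac, hy0 ▸ nil_mem_fac v⟩
  · have hylen : 1 ≤ y.length := by
      cases y
      · exact absurd rfl hy0
      · simp
    set B : ℕ := Y.sup List.length + 1 with hB
    have hB1 : 1 ≤ B := by omega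
    have hBb : ∀ b ∈ Y, b.length ≤ B := by
      intro b hbY
      have := Finset.le_sup (f := List.length) hbY
      omega
    have hbY : ∀ b ∈ Y, y <:+: b := fun b hb => (hYfac b hb).2
    have hbne : ∀ b ∈ Y, 1 ≤ b.length := by
      intro b hb
      have := (hbY b hb).length_le
      omega
    set S₀ : Set (List A) :=
      {u | ∃ L : List (List A), (∀ b ∈ L, b ∈ Y) ∧ L.flatten ∈ Fac w ∧ u <:+: L.flatten}
      with hS₀
    have hS₀W : S₀ ⊆ Fac w := by
      rintro u ⟨L, _, hLf, hu⟩
      exact fac_factorClosed w _ hLf _ hu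
    have hS₀fc : FactorClosed S₀ := by
      rintro ys ⟨L, hLY, hLf, hys⟩ u hu
      exact ⟨L, hLY, hLf, hu.trans hys⟩
    have hS₀all : ∀ n : ℕ, ∃ u ∈ S₀, u.length = n := by
      intro n
      obtain ⟨L, hLlen, hLY, hLf⟩ := hL n
      have hflen : n ≤ L.flatten.length :=
        hLlen ▸ length_le_flatten L (fun b hb => hbne b (hLY b hb))
      refine ⟨L.flatten.take n, ⟨L, hLY, hLf, (L.flatten.take_prefix n).isInfix⟩, ?_⟩
      rw [List.length_take]
      exact min_eq_left hflen
    obtain ⟨v, hvUR, hvfac⟩ := exists_ur S₀ hS₀fc hS₀all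
    refine ⟨v, hvUR, hvfac.trans hS₀W, ?_⟩
    have hu : factorAt v 0 (2 * B) ∈ S₀ := hvfac (factorAt_mem_fac v 0 (2 * B))
    obtain ⟨L, hLY, hLf, hinf⟩ := hu
    have hyin : y <:+: factorAt v 0 (2 * B) := by
      apply window hB1 hbY hBb L hLY _ hinf
      rw [length_factorAt]
    exact fac_factorClosed v _ (factorAt_mem_fac v 0 (2 * B)) _ hyin

lemma open_claim {A : Type*} (w : ℕ → A) :
    ∀ U : Set {F // F ∈ RecSpec w},
      TopologicalSpace.GenerateOpen
        {U | ∃ S : Set (List A), S ⊆ Fac w ∧ FactorClosed S ∧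
          U = {F : {F // F ∈ RecSpec w} | ¬ F.1 ⊆ S}} U →
      ∀ F, F ∈ U → ∃ y ∈ F.1, ∀ F' : {F // F ∈ RecSpec w}, y ∈ F'.1 → F' ∈ U := by
  intro U hU
  induction hU with
  | basic V hV =>
    obtain ⟨S, hSW, hSfc, rfl⟩ := hV
    intro F hF
    rw [Set.mem_setOf_eq, Set.not_subset] at hF
    obtain ⟨z, hzF, hzS⟩ := hF
    refine ⟨z, hzF, ?_⟩
    intro F' hz'
    rw [Set.mem_setOf_eq, Set.not_subset]
    exact ⟨z, hz', hzS⟩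
  | univ =>
    intro F _
    obtain ⟨v, hvrec, hFv, hvw⟩ := F.2
    exact ⟨[], hFv ▸ nil_mem_fac v, fun F' _ => trivial⟩
  | inter U₁ U₂ h₁ h₂ ih₁ ih₂ =>
    intro F hF
    obtain ⟨y₁, hy₁, H₁⟩ := ih₁ F hF.1
    obtain ⟨y₂, hy₂, H₂⟩ := ih₂ F hF.2
    obtain ⟨v, hvrec, hFv, hvw⟩ := F.2
    rw [hFv] at hy₁ hy₂
    obtain ⟨z, hzv, hz₁, hz₂⟩ := combine_factors hvrec hy₁ hy₂
    refine ⟨z, hFv ▸ hzv, ?_⟩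
    intro F' hz'
    obtain ⟨v', hv'rec, hF'v, hv'w⟩ := F'.2
    rw [hF'v] at hz'
    have h1' : y₁ ∈ Fac v' := fac_factorClosed v' _ hz' _ hz₁
    have h2' : y₂ ∈ Fac v' := fac_factorClosed v' _ hz' _ hz₂
    exact ⟨H₁ F' (by rw [hF'v]; exact h1'), H₂ F' (by rw [hF'v]; exact h2')⟩
  | sUnion 𝒮 h ih =>
    intro F hF
    obtain ⟨U₀, hU₀, hFU₀⟩ := hF
    obtain ⟨y, hy, H⟩ := ih U₀ hU₀ F hFU₀
    exact ⟨y, hy, fun F' h' => ⟨U₀, hU₀, H F' h'⟩⟩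


theorem uniformlyRecurrent_dense_of_radical_empty {A : Type*} [Finite A]
    (w : ℕ → A) (hrad : Rad w = ∅) :
    ∀ U : Set {F // F ∈ RecSpec w}, @IsOpen _ (recTop w) U → U.Nonempty →
      ∃ F ∈ U, ∃ v : ℕ → A, UniformlyRecurrent v ∧ F.1 = Fac v := by
  intro U hU hne
  obtain ⟨F, hF⟩ := hne
  have hgen : TopologicalSpace.GenerateOpen
      {U | ∃ S : Set (List A), S ⊆ Fac w ∧ FactorClosed S ∧
        U = {F : {F // F ∈ RecSpec w} | ¬ F.1 ⊆ S}} U := hU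
  obtain ⟨y, hyF, H⟩ := open_claim w U hgen F hF
  obtain ⟨v₀, hv₀rec, hFv₀, hv₀w⟩ := F.2
  have hyw : y ∈ Fac w := hv₀w (hFv₀ ▸ hyF)
  obtain ⟨v, hvUR, hvw, hyv⟩ := key_lemma w hrad hyw
  have hmem : Fac v ∈ RecSpec w := ⟨v, ur_recurrent hvUR, rfl, hvw⟩
  exact ⟨⟨Fac v, hmem⟩, H ⟨Fac v, hmem⟩ hyv, v, hvUR, rfl⟩
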